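/- Let $S_1, \dots, S_{\mathcal{K}}$ cover $\{1,\dots,n\}$ and suppose the graph $\mathcal{G}$ on vertices $\{1,\dots,n\}$, with an edge between $j$ and $k$ whenever $j, k \in S_i$ for some $i$, is connected. Let $x \in \mathbb{R}^n$ with mean $m(x)$. Then for every index $i_0 \in \{1, \dots, \mathcal{K}\}$, $\max_{j \in S_{i_0}} |x_j - m(x)| \leq \sum_{i=1}^{\mathcal{K}} \big( \max_{j \in S_i} x_j - \min_{j \in S_i} x_j \big)$. -/

import Mathlib

private lemma cross_edge {n : ℕ} (G : SimpleGraph (Fin n)) (P : Fin n → Prop) :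
    ∀ {u v : Fin n}, G.Walk u v → P u → ¬ P v → ∃ a b, G.Adj a b ∧ P a ∧ ¬ P b := by
  intro u v w
  induction w with
  | nil => exact fun h h' => absurd h h'
  | @cons u w v h p ih =>
    intro hu hv
    by_cases hw : P w
    · exact ih hw hv
    · exact ⟨u, w, h, hu, hw⟩

private lemma grow {n K : ℕ} (S : Fin K → Finset (Fin n)) (hSne : ∀ i, (S i).Nonempty)
    (hcover : ∀ ℓ : Fin n, ∃ i, ℓ ∈ S i)
    (G : SimpleGraph (Fin n))
    (hG : ∀ j k, G.Adj j k ↔ j ≠ k ∧ ∃ i, j ∈ S i ∧ k ∈ S i)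
    (hconn : G.Connected) (x : Fin n → ℝ) :
    ∀ d : ℕ, ∀ T : Finset (Fin K), T.Nonempty → (Finset.univ \ T).card ≤ d →
      ∀ hVT : (T.biUnion S).Nonempty,
      (T.biUnion S).sup' hVT x - (T.biUnion S).inf' hVT x ≤
        ∑ i ∈ T, ((S i).sup' (hSne i) x - (S i).inf' (hSne i) x) →
      ∀ a b : Fin n, x a - x b ≤ ∑ i, ((S i).sup' (hSne i) x - (S i).inf' (hSne i) x) := by
  have hspread : ∀ i, 0 ≤ (S i).sup' (hSne i) x - (S i).inf' (hSne i) x := by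
    intro i
    obtain ⟨q, hq⟩ := hSne i
    have h1 := Finset.le_sup' x hq
    have h2 := Finset.inf'_le x hq
    linarith
  -- key: if biUnion is full, done
  have hdone : ∀ T : Finset (Fin K), T.biUnion S = Finset.univ →
      ∀ hVT : (T.biUnion S).Nonempty,
      (T.biUnion S).sup' hVT x - (T.biUnion S).inf' hVT x ≤
        ∑ i ∈ T, ((S i).sup' (hSne i) x - (S i).inf' (hSne i) x) →
      ∀ a b : Fin n, x a - x b ≤ ∑ i, ((S i).sup' (hSne i) x - (S i).inf' (hSne i) x) := by
    intro T hfull hVT hinv a b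
    have ha : a ∈ T.biUnion S := hfull ▸ Finset.mem_univ a
    have hb : b ∈ T.biUnion S := hfull ▸ Finset.mem_univ b
    have h1 := Finset.le_sup' x ha
    have h2 := Finset.inf'_le x hb
    have h3 : ∑ i ∈ T, ((S i).sup' (hSne i) x - (S i).inf' (hSne i) x) ≤
        ∑ i, ((S i).sup' (hSne i) x - (S i).inf' (hSne i) x) :=
      Finset.sum_le_sum_of_subset_of_nonneg (Finset.subset_univ T)
        (fun i _ _ => hspread i)
    linarith
  intro d
  induction d with
  | zero =>
    intro T hTne hcard hVT hinv a b
    have hTuniv : (Finset.univ : Finset (Fin K)) ⊆ T := by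
      have h0 : Finset.univ \ T = ∅ := Finset.card_eq_zero.mp (Nat.le_zero.mp hcard)
      intro i _
      by_contra hi
      exact absurd (Finset.mem_sdiff.mpr ⟨Finset.mem_univ i, hi⟩) (h0 ▸ Finset.notMem_empty i)
    have hfull : T.biUnion S = Finset.univ := by
      apply Finset.eq_univ_of_forall
      intro v
      obtain ⟨i, hi⟩ := hcover v
      exact Finset.mem_biUnion.mpr ⟨i, hTuniv (Finset.mem_univ i), hi⟩
    exact hdone T hfull hVT hinv a b
  | succ d ih =>
    intro T hTne hcard hVT hinv a b
    by_cases hfull : T.biUnion S = Finset.univ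
    · exact hdone T hfull hVT hinv a b
    · -- there is a vertex outside
      obtain ⟨v, hv⟩ : ∃ v, v ∉ T.biUnion S := by
        by_contra h
        push_neg at h
        exact hfull (Finset.eq_univ_of_forall h)
      obtain ⟨u, hu⟩ := id hVT
      obtain ⟨w⟩ := hconn.preconnected u v
      obtain ⟨c, e, hadj, hc, he⟩ :=
        cross_edge G (fun z => z ∈ T.biUnion S) w hu hv
      obtain ⟨_, p, hcp, hep⟩ := (hG c e).mp hadj
      have hpT : p ∉ T := fun hpT => he (Finset.mem_biUnion.mpr ⟨p, hpT, hep⟩)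
      -- grow T by p
      have hcard' : (Finset.univ \ insert p T).card ≤ d := by
        have hsub : Finset.univ \ insert p T ⊂ Finset.univ \ T := by
          refine Finset.ssubset_iff_of_subset
            (Finset.sdiff_subset_sdiff (le_refl _) (Finset.subset_insert p T)) |>.mpr ?_
          exact ⟨p, Finset.mem_sdiff.mpr ⟨Finset.mem_univ p, hpT⟩,
            fun h => (Finset.mem_sdiff.mp h).2 (Finset.mem_insert_self p T)⟩
        have := Finset.card_lt_card hsub
        omega
      have hVT' : ((insert p T).biUnion S).Nonempty :=
        ⟨u, Finset.biUnion_subset_biUnion_of_subset_left S (Finset.subset_insert p T) hu⟩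
      have hinv' : ((insert p T).biUnion S).sup' hVT' x -
          ((insert p T).biUnion S).inf' hVT' x ≤
          ∑ i ∈ insert p T, ((S i).sup' (hSne i) x - (S i).inf' (hSne i) x) := by
        rw [Finset.sum_insert hpT]
        have hbi : (insert p T).biUnion S = S p ∪ T.biUnion S := Finset.biUnion_insert
        have hsup : ((insert p T).biUnion S).sup' hVT' x =
            (S p).sup' (hSne p) x ⊔ (T.biUnion S).sup' ⟨u, hu⟩ x := by
          rw [Finset.sup'_congr hVT' hbi (fun _ _ => rfl)]
          exact Finset.sup'_union (hSne p) ⟨u, hu⟩ x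
        have hinf : ((insert p T).biUnion S).inf' hVT' x =
            (S p).inf' (hSne p) x ⊓ (T.biUnion S).inf' ⟨u, hu⟩ x := by
          rw [Finset.inf'_congr hVT' hbi (fun _ _ => rfl)]
          exact Finset.inf'_union (hSne p) ⟨u, hu⟩ x
        rw [hsup, hinf]
        set A := (S p).sup' (hSne p) x
        set B := (S p).inf' (hSne p) x
        set C := (T.biUnion S).sup' ⟨u, hu⟩ x
        set D := (T.biUnion S).inf' ⟨u, hu⟩ x
        have h1 : B ≤ x c := Finset.inf'_le x hcp
        have h2 : x c ≤ A := Finset.le_sup' x hcp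
        have h3 : D ≤ x c := Finset.inf'_le x hc
        have h4 : x c ≤ C := Finset.le_sup' x hc
        have hCD : C - D ≤ ∑ i ∈ T, ((S i).sup' (hSne i) x - (S i).inf' (hSne i) x) := hinv
        change max A C - min B D ≤ _
        rcases max_cases A C with ⟨h5, _⟩ | ⟨h5, _⟩ <;>
          rcases min_cases B D with ⟨h6, _⟩ | ⟨h6, _⟩ <;> rw [h5, h6] <;> linarith
      exact ih (insert p T) (Finset.insert_nonempty p T) hcard' hVT' hinv' a b

theorem stmt_17 (n K : ℕ) (hn : 0 < n)
    (S : Fin K → Finset (Fin n)) (hSne : ∀ i, (S i).Nonempty)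
    (hcover : ∀ ℓ : Fin n, ∃ i, ℓ ∈ S i)
    (G : SimpleGraph (Fin n))
    (hG : ∀ j k, G.Adj j k ↔ j ≠ k ∧ ∃ i, j ∈ S i ∧ k ∈ S i)
    (hconn : G.Connected)
    (x : Fin n → ℝ) (m : ℝ) (hm : m = (∑ j, x j) / n) :
    ∀ i₀ : Fin K, ∀ j ∈ S i₀,
      |x j - m| ≤ ∑ i, ((S i).sup' (hSne i) x - (S i).inf' (hSne i) x) := by
  intro i₀ j hj
  -- the key pairwise bound
  have key : ∀ a b : Fin n, x a - x b ≤
      ∑ i, ((S i).sup' (hSne i) x - (S i).inf' (hSne i) x) := by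
    have hVT : (({i₀} : Finset (Fin K)).biUnion S).Nonempty := by
      obtain ⟨q, hq⟩ := hSne i₀
      exact ⟨q, Finset.mem_biUnion.mpr ⟨i₀, Finset.mem_singleton_self i₀, hq⟩⟩
    apply grow S hSne hcover G hG hconn x (Finset.univ \ {i₀}).card {i₀}
      (Finset.singleton_nonempty i₀) le_rfl hVT
    have hbi : ({i₀} : Finset (Fin K)).biUnion S = S i₀ := Finset.singleton_biUnion
    rw [Finset.sup'_congr hVT hbi (fun _ _ => rfl),
      Finset.inf'_congr hVT hbi (fun _ _ => rfl), Finset.sum_singleton]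
  -- m lies between min and max of x
  have hne : (Finset.univ : Finset (Fin n)).Nonempty := ⟨⟨0, hn⟩, Finset.mem_univ _⟩
  obtain ⟨a, _, ha⟩ := Finset.exists_min_image Finset.univ x hne
  obtain ⟨b, _, hb⟩ := Finset.exists_max_image Finset.univ x hne
  have hsum_ge : (n : ℝ) * x a ≤ ∑ j, x j := by
    calc (n : ℝ) * x a = ∑ _j : Fin n, x a := by
          rw [Finset.sum_const, Finset.card_univ, Fintype.card_fin, nsmul_eq_mul]
      _ ≤ ∑ j, x j := Finset.sum_le_sum (fun i _ => ha i (Finset.mem_univ i))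
  have hsum_le : (∑ j, x j) ≤ (n : ℝ) * x b := by
    calc (∑ j, x j) ≤ ∑ _j : Fin n, x b := Finset.sum_le_sum (fun i _ => hb i (Finset.mem_univ i))
      _ = (n : ℝ) * x b := by
          rw [Finset.sum_const, Finset.card_univ, Fintype.card_fin, nsmul_eq_mul]
  have hn' : (0 : ℝ) < n := by exact_mod_cast hn
  have hma : x a ≤ m := by rw [hm]; rw [le_div_iff₀ hn']; linarith
  have hmb : m ≤ x b := by rw [hm]; rw [div_le_iff₀ hn']; linarith
  rw [abs_sub_le_iff]
  constructor
  · have := key j a; linarith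
  · have := key b j; linarith
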